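/- Suppose ψ : ℝ^d → ℝ is differentiable and L-smooth with L > 0, and let (v^{s,q}) be the Markov chain coordinate descent iterates generated from an initial point v^{0,0} with step size η ∈ (0, 1/((L+1)·S·Q)], block sequence k^0,…,k^{S−1}, and Q inner updates per block, with final iterate v^{S,0}. Define Ψ := ⟨∇ψ(v^{0,0}), v^{S,0} − v^{0,0}⟩ + ((L+1)/2)·‖v^{S,0} − v^{0,0}‖². Then Ψ ≤ η·S·Q·C₁·(1 + η·(L+1)·S·Q·C₁)·‖∇ψ(v^{0,0})‖² + η·(η·(L+1)·S·Q − 1)·∑_{s=0}^{S−1} ∑_{q=0}^{Q−1} ‖∇_{k^s} ψ(v^{0,0})‖², where C₁ := η·e·L·S·Q. -/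

import Mathlib

/-- For a block `k` (blocks given by the assignment `blk : Fin d → K` of coordinates
to blocks), the vector `∇̄_k ψ(v)` agreeing with the gradient of `ψ` at `v` on the
coordinates of block `k` and zero elsewhere.  Note `‖maskedGrad blk ψ v k‖ = ‖∇_k ψ(v)‖`. -/
noncomputable def maskedGrad {d : ℕ} {K : Type*} [DecidableEq K]
    (blk : Fin d → K) (ψ : EuclideanSpace ℝ (Fin d) → ℝ)
    (v : EuclideanSpace ℝ (Fin d)) (k : K) : EuclideanSpace ℝ (Fin d) :=
  WithLp.toLp 2 (fun i => if blk i = k then gradient ψ v i else 0)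

lemma sq_sum_le_card_mul {ι : Type*} (s : Finset ι) (f : ι → ℝ) :
    (∑ i ∈ s, f i)^2 ≤ s.card * ∑ i ∈ s, (f i)^2 := by
  have h := Finset.sum_mul_sq_le_sq_mul_sq s (fun _ => (1:ℝ)) f
  simpa using h

lemma norm_sum_sq_le {ι : Type*} {E : Type*} [NormedAddCommGroup E]
    (s : Finset ι) (w : ι → E) :
    ‖∑ i ∈ s, w i‖^2 ≤ s.card * ∑ i ∈ s, ‖w i‖^2 := by
  calc ‖∑ i ∈ s, w i‖^2 ≤ (∑ i ∈ s, ‖w i‖)^2 := by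
        apply pow_le_pow_left₀ (norm_nonneg _) (norm_sum_le s w)
    _ ≤ s.card * ∑ i ∈ s, ‖w i‖^2 := sq_sum_le_card_mul s _

section MG
variable {d : ℕ} {K : Type*} [DecidableEq K] (blk : Fin d → K)
  (ψ : EuclideanSpace ℝ (Fin d) → ℝ)

lemma maskedGrad_sub_norm_le (x y : EuclideanSpace ℝ (Fin d)) (k : K) :
    ‖maskedGrad blk ψ x k - maskedGrad blk ψ y k‖ ≤ ‖gradient ψ x - gradient ψ y‖ := by
  rw [EuclideanSpace.norm_eq, EuclideanSpace.norm_eq]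
  apply Real.sqrt_le_sqrt
  apply Finset.sum_le_sum
  intro i _
  have : (maskedGrad blk ψ x k - maskedGrad blk ψ y k) i
      = if blk i = k then (gradient ψ x - gradient ψ y) i else 0 := by
    simp only [maskedGrad, PiLp.sub_apply, PiLp.toLp_apply]; split <;> simp
  rw [this]
  split
  · exact le_rfl
  · simpa using sq_nonneg _


lemma maskedGrad_norm_le (x : EuclideanSpace ℝ (Fin d)) (k : K) :
    ‖maskedGrad blk ψ x k‖ ≤ ‖gradient ψ x‖ := by
  rw [EuclideanSpace.norm_eq, EuclideanSpace.norm_eq]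
  apply Real.sqrt_le_sqrt
  apply Finset.sum_le_sum
  intro i _
  simp only [maskedGrad, PiLp.toLp_apply]
  split
  · exact le_rfl
  · simpa using sq_nonneg _

lemma inner_maskedGrad (x : EuclideanSpace ℝ (Fin d)) (k : K) :
    (inner ℝ (gradient ψ x) (maskedGrad blk ψ x k) : ℝ) = ‖maskedGrad blk ψ x k‖^2 := by
  rw [← real_inner_self_eq_norm_sq]
  rw [PiLp.inner_apply, PiLp.inner_apply]
  apply Finset.sum_congr rfl
  intro i _
  simp only [maskedGrad, PiLp.toLp_apply, RCLike.inner_apply, conj_trivial]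
  split <;> simp

end MG
set_option maxHeartbeats 1000000 in
/-- **Lemma 3.** For Markov chain coordinate descent iterates of an `L`-smooth
differentiable `ψ` with step size `η ∈ (0, 1/((L+1)SQ)]` and final iterate `v^{S,0}`,
letting `Ψ := ⟨∇ψ(v⁰⁰), v^{S,0} − v⁰⁰⟩ + ((L+1)/2)‖v^{S,0} − v⁰⁰‖²`, we have
`Ψ ≤ η S Q C₁ (1 + η(L+1)SQC₁) ‖∇ψ(v⁰⁰)‖²
  + η(η(L+1)SQ − 1) ∑_{s<S} ∑_{q<Q} ‖∇_{k^s}ψ(v⁰⁰)‖²`, where `C₁ = η e L S Q`. -/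
theorem mccd_qub_bound
    {d : ℕ} (hd : 1 ≤ d) {K : Type*} [Fintype K] [DecidableEq K]
    (blk : Fin d → K)
    (ψ : EuclideanSpace ℝ (Fin d) → ℝ) (L : ℝ) (hL : 0 < L)
    (hdiff : Differentiable ℝ ψ)
    (hsmooth : ∀ x y : EuclideanSpace ℝ (Fin d),
      ‖gradient ψ x - gradient ψ y‖ ≤ L * ‖x - y‖)
    (S Q : ℕ) (hS : 1 ≤ S) (hQ : 1 ≤ Q)
    (η : ℝ) (hη : 0 < η) (hηub : η ≤ 1 / ((L + 1) * S * Q))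
    (kseq : ℕ → K)
    (v : ℕ → ℕ → EuclideanSpace ℝ (Fin d))
    (hrecq : ∀ s < S, ∀ q < Q,
      v s (q + 1) = v s q - η • maskedGrad blk ψ (v s q) (kseq s))
    (hrecs : ∀ s < S, v (s + 1) 0 = v s Q)
    (C₁ : ℝ) (hC₁ : C₁ = η * Real.exp 1 * L * S * Q)
    (Ψ : ℝ)
    (hΨ : Ψ = inner ℝ (gradient ψ (v 0 0)) (v S 0 - v 0 0)
      + (L + 1) / 2 * ‖v S 0 - v 0 0‖ ^ 2) :
    Ψ ≤ η * S * Q * C₁ * (1 + η * (L + 1) * S * Q * C₁) * ‖gradient ψ (v 0 0)‖ ^ 2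
        + η * (η * (L + 1) * S * Q - 1) * ∑ s ∈ Finset.range S, ∑ q ∈ Finset.range Q,
            ‖maskedGrad blk ψ (v 0 0) (kseq s)‖ ^ 2 := by
  classical
  set g0 : EuclideanSpace ℝ (Fin d) := gradient ψ (v 0 0) with hg0
  set G : ℝ := ‖g0‖ with hGdef
  have hG0 : 0 ≤ G := norm_nonneg _
  -- block gradients
  set gb : ℕ → EuclideanSpace ℝ (Fin d) := fun s => maskedGrad blk ψ (v 0 0) (kseq s) with hgb
  set g : ℕ → ℕ → EuclideanSpace ℝ (Fin d) := fun s q => maskedGrad blk ψ (v s q) (kseq s) with hg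
  -- telescoping within a stage
  have htel0 : ∀ s < S, ∀ q ≤ Q,
      v s q - v s 0 = -(η • ∑ r ∈ Finset.range q, g s r) := by
    intro s hs q
    induction q with
    | zero => intro _; simp
    | succ q ih =>
      intro h
      have hqQ : q < Q := h
      have ihq := ih hqQ.le
      rw [hrecq s hs q hqQ, Finset.sum_range_succ, smul_add]
      calc v s q - η • g s q - v s 0 = (v s q - v s 0) - η • g s q := by abel
        _ = -(η • ∑ r ∈ Finset.range q, g s r) - η • g s q := by rw [ihq]
        _ = -(η • ∑ r ∈ Finset.range q, g s r + η • g s q) := by abel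
  -- telescoping across stages
  have htelS : ∀ s ≤ S,
      v s 0 - v 0 0 = -(η • ∑ t ∈ Finset.range s, ∑ q ∈ Finset.range Q, g t q) := by
    intro s
    induction s with
    | zero => intro _; simp
    | succ s ih =>
      intro h
      have hsS : s < S := h
      have ihs := ih hsS.le
      rw [hrecs s hsS, Finset.sum_range_succ, smul_add]
      calc v s Q - v 0 0 = (v s Q - v s 0) + (v s 0 - v 0 0) := by abel
        _ = -(η • ∑ r ∈ Finset.range Q, g s r)
            + -(η • ∑ t ∈ Finset.range s, ∑ q ∈ Finset.range Q, g t q) := by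
            rw [htel0 s hsS Q le_rfl, ihs]
        _ = -(η • ∑ t ∈ Finset.range s, ∑ q ∈ Finset.range Q, g t q
            + η • ∑ q ∈ Finset.range Q, g s q) := by abel
  have htel : v S 0 - v 0 0
      = -(η • ∑ t ∈ Finset.range S, ∑ q ∈ Finset.range Q, g t q) := htelS S le_rfl
  -- one-step distance growth
  have hstep : ∀ s < S, ∀ q < Q,
      ‖v s (q+1) - v 0 0‖ ≤ (1 + η*L) * ‖v s q - v 0 0‖ + η * G := by
    intro s hs q hq
    have hgn : ‖g s q‖ ≤ L * ‖v s q - v 0 0‖ + G := by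
      calc ‖g s q‖ ≤ ‖g s q - gb s‖ + ‖gb s‖ := by
            simpa using norm_add_le (g s q - gb s) (gb s)
        _ ≤ L * ‖v s q - v 0 0‖ + G := by
            refine add_le_add ?_ ?_
            · calc ‖g s q - gb s‖ ≤ ‖gradient ψ (v s q) - gradient ψ (v 0 0)‖ :=
                    maskedGrad_sub_norm_le blk ψ _ _ _
                _ ≤ L * ‖v s q - v 0 0‖ := hsmooth _ _
            · exact maskedGrad_norm_le blk ψ _ _
    have h1 : v s (q+1) - v 0 0 = (v s q - v 0 0) - η • g s q := by
      rw [hrecq s hs q hq]; abel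
    calc ‖v s (q+1) - v 0 0‖ = ‖(v s q - v 0 0) - η • g s q‖ := by rw [h1]
      _ ≤ ‖v s q - v 0 0‖ + ‖η • g s q‖ := norm_sub_le _ _
      _ = ‖v s q - v 0 0‖ + η * ‖g s q‖ := by
          rw [norm_smul, Real.norm_eq_abs, abs_of_pos hη]
      _ ≤ ‖v s q - v 0 0‖ + η * (L * ‖v s q - v 0 0‖ + G) := by
          have := mul_le_mul_of_nonneg_left hgn hη.le
          linarith
      _ = (1 + η*L) * ‖v s q - v 0 0‖ + η * G := by ring
  -- exponential recursion bound
  have hexpstep : ∀ (t : ℕ) (r : ℝ), 0 ≤ r →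
      L * r ≤ (Real.exp (η*L*t) - 1) * G →
      L * ((1 + η*L) * r + η * G) ≤ (Real.exp (η*L*(t+1:ℕ)) - 1) * G := by
    intro t r hr hrb
    have ha : 1 ≤ Real.exp (η*L*t) := by
      rw [Real.one_le_exp_iff]; positivity
    have hb : 1 + η*L ≤ Real.exp (η*L) := by
      have := Real.add_one_le_exp (η*L); linarith
    have hsplit : Real.exp (η*L*(t+1:ℕ)) = Real.exp (η*L*t) * Real.exp (η*L) := by
      rw [← Real.exp_add]; push_cast; ring_nf
    rw [hsplit]
    nlinarith [mul_nonneg (mul_nonneg hG0 (by linarith : (0:ℝ) ≤ Real.exp (η*L*t)))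
        (by linarith : (0:ℝ) ≤ Real.exp (η*L) - (1 + η*L)),
      mul_nonneg (by positivity : (0:ℝ) ≤ 1 + η*L)
        (by linarith : (0:ℝ) ≤ (Real.exp (η*L*t) - 1) * G - L * r)]
  -- distance bound at (s,q)
  have hdist : ∀ s < S, ∀ q ≤ Q,
      L * ‖v s q - v 0 0‖ ≤ (Real.exp (η*L*(s*Q+q:ℕ)) - 1) * G := by
    have inner : ∀ s < S,
        L * ‖v s 0 - v 0 0‖ ≤ (Real.exp (η*L*(s*Q:ℕ)) - 1) * G →
        ∀ q ≤ Q, L * ‖v s q - v 0 0‖ ≤ (Real.exp (η*L*(s*Q+q:ℕ)) - 1) * G := by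
      intro s hs h0 q
      induction q with
      | zero => intro _; simpa using h0
      | succ q ih =>
        intro h
        have hqQ : q < Q := h
        have ihq := ih hqQ.le
        have := hexpstep (s*Q+q) ‖v s q - v 0 0‖ (norm_nonneg _) ihq
        have h2 := mul_le_mul_of_nonneg_left (hstep s hs q hqQ) hL.le
        have hcast : s*Q + (q+1) = (s*Q + q) + 1 := by ring
        rw [hcast]
        linarith
    have outer : ∀ s ≤ S, s < S →
        L * ‖v s 0 - v 0 0‖ ≤ (Real.exp (η*L*(s*Q:ℕ)) - 1) * G := by
      intro s
      induction s with
      | zero =>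
        intro _ _
        have : 1 ≤ Real.exp (η*L*(0*Q:ℕ)) := by
          rw [Real.one_le_exp_iff]; positivity
        have hz : v 0 0 - v 0 0 = 0 := sub_self _
        rw [hz, norm_zero, mul_zero]
        nlinarith
      | succ s ih =>
        intro h1 h2
        have hsS : s < S := by omega
        have hb := inner s hsS (ih hsS.le hsS) Q le_rfl
        rw [hrecs s hsS]
        have hcast : (s+1)*Q = s*Q + Q := by ring
        rw [hcast]
        exact hb
    intro s hs q hq
    exact inner s hs (outer s hs.le hs) q hq
  -- basic positivity facts
  have hS1 : (1:ℝ) ≤ (S:ℝ) := by exact_mod_cast hS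
  have hQ1 : (1:ℝ) ≤ (Q:ℝ) := by exact_mod_cast hQ
  have hY1 : η * L * ((S:ℝ) * (Q:ℝ)) ≤ 1 := by
    have hpos : (0:ℝ) < (L + 1) * S * Q := by positivity
    have := (le_div_iff₀ hpos).mp hηub
    nlinarith
  -- exp y - 1 ≤ y * e for y ∈ [0,1]
  have hexp1 : ∀ y : ℝ, 0 ≤ y → y ≤ 1 → Real.exp y - 1 ≤ y * Real.exp 1 := by
    intro y hy0 hy1
    have h2 : Real.exp y ≤ Real.exp 1 := Real.exp_le_exp.mpr hy1
    have h5 : Real.exp (-y) * Real.exp y = 1 := by rw [← Real.exp_add]; simp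
    have h4 := Real.add_one_le_exp (-y)
    have hp := Real.exp_pos y
    have h3 : (1 - y) * Real.exp y ≤ 1 := by
      calc (1 - y) * Real.exp y ≤ Real.exp (-y) * Real.exp y :=
            mul_le_mul_of_nonneg_right (by linarith) hp.le
        _ = 1 := h5
    have h6 := mul_le_mul_of_nonneg_left h2 hy0
    nlinarith
  -- error bound
  have herr : ∀ s < S, ∀ q < Q, ‖g s q - gb s‖ ≤ C₁ * G := by
    intro s hs q hq
    have htn : s*Q + q ≤ S*Q := by
      calc s*Q + q ≤ s*Q + Q := by omega
        _ = (s+1)*Q := by ring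
        _ ≤ S*Q := Nat.mul_le_mul_right Q hs
    have hmono : Real.exp (η*L*(s*Q+q:ℕ)) ≤ Real.exp (η*L*((S:ℝ)*(Q:ℝ))) := by
      apply Real.exp_le_exp.mpr
      have : ((s*Q+q:ℕ):ℝ) ≤ (S:ℝ)*(Q:ℝ) := by exact_mod_cast htn
      exact mul_le_mul_of_nonneg_left this (by positivity)
    have hY0 : 0 ≤ η * L * ((S:ℝ)*(Q:ℝ)) := by positivity
    have hE := hexp1 _ hY0 hY1
    have hd1 := hdist s hs q hq.le
    have hsub : ‖g s q - gb s‖ ≤ L * ‖v s q - v 0 0‖ := by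
      calc ‖g s q - gb s‖ ≤ ‖gradient ψ (v s q) - gradient ψ (v 0 0)‖ :=
            maskedGrad_sub_norm_le blk ψ _ _ _
        _ ≤ L * ‖v s q - v 0 0‖ := hsmooth _ _
    calc ‖g s q - gb s‖ ≤ L * ‖v s q - v 0 0‖ := hsub
      _ ≤ (Real.exp (η*L*(s*Q+q:ℕ)) - 1) * G := hd1
      _ ≤ (Real.exp (η*L*((S:ℝ)*(Q:ℝ))) - 1) * G := by
          have := mul_le_mul_of_nonneg_right hmono hG0
          linarith
      _ ≤ (η*L*((S:ℝ)*(Q:ℝ)) * Real.exp 1) * G := mul_le_mul_of_nonneg_right hE hG0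
      _ = C₁ * G := by rw [hC₁]; ring
  -- sums
  set A : EuclideanSpace ℝ (Fin d) :=
    ∑ s ∈ Finset.range S, ∑ q ∈ Finset.range Q, gb s with hA
  set Er : EuclideanSpace ℝ (Fin d) :=
    ∑ s ∈ Finset.range S, ∑ q ∈ Finset.range Q, (g s q - gb s) with hEr
  have hAE : A + Er = ∑ s ∈ Finset.range S, ∑ q ∈ Finset.range Q, g s q := by
    rw [hA, hEr, ← Finset.sum_add_distrib]
    refine Finset.sum_congr rfl fun s _ => ?_
    rw [← Finset.sum_add_distrib]
    refine Finset.sum_congr rfl fun q _ => ?_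
    abel
  have hΔ : v S 0 - v 0 0 = -(η • (A + Er)) := by rw [htel, hAE]
  have hErn : ‖Er‖ ≤ ((S:ℝ)*(Q:ℝ)) * (C₁ * G) := by
    calc ‖Er‖ ≤ ∑ s ∈ Finset.range S, ‖∑ q ∈ Finset.range Q, (g s q - gb s)‖ :=
          norm_sum_le _ _
      _ ≤ ∑ s ∈ Finset.range S, ∑ q ∈ Finset.range Q, ‖g s q - gb s‖ :=
          Finset.sum_le_sum fun s _ => norm_sum_le _ _
      _ ≤ ∑ s ∈ Finset.range S, ∑ q ∈ Finset.range Q, C₁ * G := by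
          refine Finset.sum_le_sum fun s hs => Finset.sum_le_sum fun q hq => ?_
          exact herr s (Finset.mem_range.mp hs) q (Finset.mem_range.mp hq)
      _ = ((S:ℝ)*(Q:ℝ)) * (C₁ * G) := by
          simp [Finset.sum_const, Finset.card_range]; ring
  set TT : ℝ := ∑ s ∈ Finset.range S, ∑ q ∈ Finset.range Q, ‖gb s‖^2 with hTT
  have hTT0 : 0 ≤ TT := by
    rw [hTT]
    exact Finset.sum_nonneg fun s _ => Finset.sum_nonneg fun q _ => sq_nonneg _
  have hAn : ‖A‖^2 ≤ ((S:ℝ)*(Q:ℝ)) * TT := by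
    have hA' : A = ∑ p ∈ Finset.range S ×ˢ Finset.range Q, gb p.1 := by
      rw [hA, Finset.sum_product]
    calc ‖A‖^2 = ‖∑ p ∈ Finset.range S ×ˢ Finset.range Q, gb p.1‖^2 := by rw [hA']
      _ ≤ (Finset.range S ×ˢ Finset.range Q).card
          * ∑ p ∈ Finset.range S ×ˢ Finset.range Q, ‖gb p.1‖^2 := norm_sum_sq_le _ _
      _ = ((S:ℝ)*(Q:ℝ)) * TT := by
          rw [Finset.card_product, Finset.card_range, Finset.card_range,
            Finset.sum_product, hTT]
          push_cast; ring
  have hinner1 : (inner ℝ g0 A : ℝ) = TT := by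
    rw [hA, hTT, inner_sum]
    refine Finset.sum_congr rfl fun s _ => ?_
    rw [inner_sum]
    refine Finset.sum_congr rfl fun q _ => ?_
    exact inner_maskedGrad blk ψ _ _
  have hinner2 : |(inner ℝ g0 Er : ℝ)| ≤ G * (((S:ℝ)*(Q:ℝ)) * (C₁ * G)) :=
    (abs_real_inner_le_norm g0 Er).trans (mul_le_mul_of_nonneg_left hErn hG0)
  have hΨ2 : Ψ = -(η * (TT + (inner ℝ g0 Er : ℝ)))
      + (L+1)/2 * (η^2 * ‖A + Er‖^2) := by
    rw [hΨ, hΔ, inner_neg_right, real_inner_smul_right, inner_add_right, hinner1,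
      norm_neg, norm_smul, Real.norm_eq_abs, abs_of_pos hη, mul_pow]
  have hA2 : ‖A + Er‖^2 ≤ 2*((S:ℝ)*(Q:ℝ)*TT) + 2*(((S:ℝ)*(Q:ℝ))*(C₁*G))^2 := by
    have h1 := norm_add_le A Er
    have hErsq : ‖Er‖^2 ≤ (((S:ℝ)*(Q:ℝ))*(C₁*G))^2 :=
      pow_le_pow_left₀ (norm_nonneg _) hErn 2
    nlinarith [norm_nonneg A, norm_nonneg Er, norm_nonneg (A+Er),
      sq_nonneg (‖A‖ - ‖Er‖), hAn]
  rw [hΨ2]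
  have hI : -(G * (((S:ℝ)*(Q:ℝ)) * (C₁ * G))) ≤ (inner ℝ g0 Er : ℝ) := by
    have := neg_abs_le (inner ℝ g0 Er : ℝ)
    linarith [hinner2, abs_le.mp hinner2]
  have c1 : (0:ℝ) ≤ (L+1)/2 * η^2 := by positivity
  have h5 := mul_le_mul_of_nonneg_left hA2 c1
  have h6 := mul_le_mul_of_nonneg_left hI hη.le
  nlinarith [h5, h6]
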